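/- (Bounded backward solution of an unstable linear recursion) Let A be a real invertible q×q matrix all of whose (complex) eigenvalues have modulus > 1, let B be a real q×p matrix, and let w : ℤ → ℝ^p be a bounded sequence. Then for every k ∈ ℤ the series x(k) := −Σ_{i=k+1}^{∞} A^{k−i} B w(i−1) (where A^{k−i} := (A^{−1})^{i−k}) converges absolutely, the sequence x is bounded, and x satisfies x(k) = A^{−1} x(k+1) − A^{−1} B w(k), equivalently x(k+1) = A x(k) + B w(k), for all k ∈ ℤ. -/

import Mathlib

noncomputable section

open Filter Topology ENNReal

attribute [local instance] Matrix.linftyOpNormedAddCommGroup Matrix.linftyOpNormedRing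
  Matrix.linftyOpNormedAlgebra

/-- All complex eigenvalues of the real matrix have modulus > 1. -/
def SpecGtOne {q : ℕ} (M : Matrix (Fin q) (Fin q) ℝ) : Prop :=
  ∀ z ∈ spectrum ℂ (M.map (algebraMap ℝ ℂ)), 1 < ‖z‖

/-- The candidate bounded backward solution `x(k) = −Σ_{i=k+1}^{∞} A^{k−i} B w(i−1)`,
reindexed by `i = k + 1 + j` so that `A^{k−i} = (A⁻¹)^{j+1}` and `w(i−1) = w(k+j)`. -/
noncomputable def bwdSol {q p : ℕ} (A : Matrix (Fin q) (Fin q) ℝ)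
    (B : Matrix (Fin q) (Fin p) ℝ) (w : ℤ → Fin p → ℝ) (k : ℤ) : Fin q → ℝ :=
  -∑' j : ℕ, (A⁻¹ ^ (j + 1)).mulVec (B.mulVec (w (k + (j : ℤ))))

lemma aux_geom (f : ℕ → ℝ) (r : ℝ) (hr : 0 < r) (N : ℕ)
    (h : ∀ n, N ≤ n → f n ≤ r ^ n) :
    ∃ c, 0 ≤ c ∧ ∀ n, f n ≤ c * r ^ n := by
  refine ⟨max 1 ((Finset.range (N+1)).sup' ⟨0, by simp⟩ fun n => f n / r ^ n),
    le_trans zero_le_one (le_max_left _ _), fun n => ?_⟩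
  rcases le_or_gt N n with hn | hn
  · calc f n ≤ r ^ n := h n hn
      _ = 1 * r ^ n := (one_mul _).symm
      _ ≤ _ := mul_le_mul_of_nonneg_right (le_max_left _ _) (pow_nonneg hr.le n)
  · have hmem : n ∈ Finset.range (N+1) := Finset.mem_range.mpr (by omega)
    have h1 : f n / r ^ n ≤ (Finset.range (N+1)).sup' ⟨0, by simp⟩ fun n => f n / r ^ n :=
      Finset.le_sup' (fun n => f n / r ^ n) hmem
    exact (div_le_iff₀ (pow_pos hr n)).mp (h1.trans (le_max_right 1 _))


lemma pow_bound {q : ℕ} (M : Matrix (Fin q) (Fin q) ℝ)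
    (h : ∀ z ∈ spectrum ℂ (M.map (algebraMap ℝ ℂ)), ‖z‖ < 1) :
    ∃ c r : ℝ, 0 ≤ c ∧ 0 ≤ r ∧ r < 1 ∧ ∀ n : ℕ, ‖M ^ n‖ ≤ c * r ^ n := by
  haveI : CompleteSpace (Matrix (Fin q) (Fin q) ℂ) := FiniteDimensional.complete ℂ _
  set Mc := M.map (algebraMap ℝ ℂ) with hMc
  have hρ : spectralRadius ℂ Mc < 1 := by
    rcases (spectrum ℂ Mc).eq_empty_or_nonempty with he | hne
    · rw [spectralRadius]; simp [he]
    · refine spectrum.spectralRadius_lt_of_forall_lt_of_nonempty hne (r := 1) fun z hz => ?_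
      have := h z hz
      rw [← NNReal.coe_lt_coe]
      simpa [coe_nnnorm] using this
  obtain ⟨r, hr1, hr2⟩ := ENNReal.lt_iff_exists_nnreal_btwn.mp hρ
  have hrlt : (r : ℝ) < 1 := by exact_mod_cast hr2
  have hG := spectrum.pow_nnnorm_pow_one_div_tendsto_nhds_spectralRadius Mc
  have hev : ∀ᶠ n : ℕ in atTop, (‖Mc ^ n‖₊ : ℝ≥0∞) ^ (1 / (n:ℝ)) < (r : ℝ≥0∞) :=
    hG.eventually_lt_const hr1
  obtain ⟨N, hN⟩ := eventually_atTop.mp (hev.and (eventually_ge_atTop 1))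
  have hnorm_eq : ∀ n : ℕ, ‖M ^ n‖ = ‖Mc ^ n‖ := by
    intro n
    have : Mc ^ n = (M ^ n).map (algebraMap ℝ ℂ) := by
      rw [hMc, ← RingHom.mapMatrix_apply, ← RingHom.mapMatrix_apply, map_pow]
    rw [this]
    simp [Matrix.linfty_opNorm_def, Matrix.map_apply]
  have hbound : ∀ n, N ≤ n → ‖M ^ n‖ ≤ (r:ℝ) ^ n := by
    intro n hn
    obtain ⟨hlt, hn1⟩ := hN n hn
    have hne : (n : ℝ) ≠ 0 := Nat.cast_ne_zero.mpr (by omega)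
    have hx : (‖Mc ^ n‖₊ : ℝ≥0∞) ≤ (r : ℝ≥0∞) ^ (n:ℕ) := by
      have h2 : ((‖Mc ^ n‖₊ : ℝ≥0∞) ^ (1 / (n:ℝ))) ^ (n:ℝ) ≤ (r : ℝ≥0∞) ^ (n:ℝ) :=
        ENNReal.rpow_le_rpow hlt.le (Nat.cast_nonneg n)
      rwa [← ENNReal.rpow_mul, one_div_mul_cancel hne, ENNReal.rpow_one,
        ENNReal.rpow_natCast] at h2
    rw [← ENNReal.coe_pow, ENNReal.coe_le_coe] at hx
    rw [hnorm_eq n]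
    exact_mod_cast NNReal.coe_le_coe.mpr hx
  obtain ⟨c, hc0, hc⟩ := aux_geom (fun n => ‖M ^ n‖) (max (r:ℝ) (1/2))
    (lt_max_of_lt_right one_half_pos) N
    (fun n hn => (hbound n hn).trans (pow_le_pow_left₀ r.coe_nonneg (le_max_left _ _) n))
  exact ⟨c, max (r:ℝ) (1/2), hc0, le_max_of_le_right one_half_pos.le,
    max_lt hrlt one_half_lt_one, hc⟩

lemma spec_inv {q : ℕ} (A : Matrix (Fin q) (Fin q) ℝ) (hA : SpecGtOne A)
    (hAdet : IsUnit A.det) :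
    ∀ z ∈ spectrum ℂ ((A⁻¹).map (algebraMap ℝ ℂ)), ‖z‖ < 1 := by
  have hAc : IsUnit (A.map (algebraMap ℝ ℂ)).det := by
    rw [← RingHom.mapMatrix_apply, ← RingHom.map_det]
    exact hAdet.map _
  have hmap : (A⁻¹).map (algebraMap ℝ ℂ) = (A.map (algebraMap ℝ ℂ))⁻¹ := by
    refine (Matrix.inv_eq_right_inv ?_).symm
    rw [← Matrix.map_mul, Matrix.mul_nonsing_inv A hAdet]
    exact Matrix.map_one _ (map_zero _) (map_one _)
  obtain ⟨u, hu⟩ := (Matrix.isUnit_iff_isUnit_det _).mpr hAc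
  have hmap2 : (A⁻¹).map (algebraMap ℝ ℂ) = ↑u⁻¹ := by
    rw [hmap, ← hu, Matrix.coe_units_inv]
  intro z hz
  rw [hmap2] at hz
  have hz0 : z ≠ 0 := by
    rintro rfl
    exact (spectrum.zero_mem_iff ℂ).mp hz u⁻¹.isUnit
  have hzi : z⁻¹ ∈ spectrum ℂ (↑u : Matrix (Fin q) (Fin q) ℂ) := spectrum.inv₀_mem_iff.mpr hz
  have h1 := hA z⁻¹ (by rw [← hu]; exact hzi)
  rw [norm_inv] at h1
  have habs : 0 < ‖z‖ := norm_pos_iff.mpr hz0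
  rw [lt_inv_comm₀ one_pos habs] at h1
  simpa using h1


/-- **Bounded backward solution of an unstable linear recursion.**
If `A` is invertible with all eigenvalues of modulus > 1 and `w` is bounded, then for every `k`
the series defining `x(k)` converges absolutely, `x` is bounded, and
`x(k) = A⁻¹ x(k+1) − A⁻¹ B w(k)`, equivalently `x(k+1) = A x(k) + B w(k)`. -/
theorem bounded_backward_solution {q p : ℕ}
    (A : Matrix (Fin q) (Fin q) ℝ) (hA : SpecGtOne A) (hAdet : IsUnit A.det)
    (B : Matrix (Fin q) (Fin p) ℝ) (w : ℤ → Fin p → ℝ)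
    (hw : ∃ C : ℝ, ∀ k : ℤ, ‖w k‖ ≤ C) :
    (∀ k : ℤ, Summable fun j : ℕ => ‖(A⁻¹ ^ (j + 1)).mulVec (B.mulVec (w (k + (j : ℤ))))‖) ∧
    (∃ C : ℝ, ∀ k : ℤ, ‖bwdSol A B w k‖ ≤ C) ∧
    (∀ k : ℤ, bwdSol A B w k =
        A⁻¹.mulVec (bwdSol A B w (k + 1)) - A⁻¹.mulVec (B.mulVec (w k))) ∧
    (∀ k : ℤ, bwdSol A B w (k + 1) = A.mulVec (bwdSol A B w k) + B.mulVec (w k)) := by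
  obtain ⟨c, r, hc0, hr0, hr1, hpow⟩ := pow_bound A⁻¹ (spec_inv A hA hAdet)
  obtain ⟨C, hC⟩ := hw
  set C' := max C 0 with hC'def
  have hC'0 : 0 ≤ C' := le_max_right _ _
  have hC' : ∀ k, ‖w k‖ ≤ C' := fun k => (hC k).trans (le_max_left _ _)
  set K := c * ‖B‖ * C' * r with hK
  have hterm : ∀ (k : ℤ) (j : ℕ),
      ‖(A⁻¹ ^ (j + 1)).mulVec (B.mulVec (w (k + (j : ℤ))))‖ ≤ K * r ^ j := by
    intro k j
    calc ‖(A⁻¹ ^ (j + 1)).mulVec (B.mulVec (w (k + (j : ℤ))))‖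
        ≤ ‖A⁻¹ ^ (j + 1)‖ * ‖B.mulVec (w (k + (j : ℤ)))‖ := Matrix.linfty_opNorm_mulVec _ _
      _ ≤ (c * r ^ (j + 1)) * (‖B‖ * C') := by
          refine mul_le_mul (hpow (j + 1)) ?_ (norm_nonneg _)
            (mul_nonneg hc0 (pow_nonneg hr0 _))
          exact (Matrix.linfty_opNorm_mulVec _ _).trans
            (mul_le_mul_of_nonneg_left (hC' _) (norm_nonneg _))
      _ = K * r ^ j := by rw [hK]; ring
  have hgeo : Summable fun j : ℕ => K * r ^ j :=
    (summable_geometric_of_lt_one hr0 hr1).mul_left K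
  have hsum : ∀ k : ℤ, Summable fun j : ℕ =>
      ‖(A⁻¹ ^ (j + 1)).mulVec (B.mulVec (w (k + (j : ℤ))))‖ := fun k =>
    Summable.of_nonneg_of_le (fun j => norm_nonneg _) (hterm k) hgeo
  have hS : ∀ k : ℤ, Summable fun j : ℕ =>
      (A⁻¹ ^ (j + 1)).mulVec (B.mulVec (w (k + (j : ℤ)))) := fun k => (hsum k).of_norm
  have hb : ∀ k : ℤ, ‖bwdSol A B w k‖ ≤ K * (1 - r)⁻¹ := by
    intro k
    rw [bwdSol, norm_neg]
    calc ‖∑' j : ℕ, (A⁻¹ ^ (j + 1)).mulVec (B.mulVec (w (k + (j : ℤ))))‖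
        ≤ ∑' j : ℕ, ‖(A⁻¹ ^ (j + 1)).mulVec (B.mulVec (w (k + (j : ℤ))))‖ :=
          norm_tsum_le_tsum_norm (hsum k)
      _ ≤ ∑' j : ℕ, K * r ^ j := Summable.tsum_le_tsum (hterm k) (hsum k) hgeo
      _ = K * (1 - r)⁻¹ := by rw [tsum_mul_left, tsum_geometric_of_lt_one hr0 hr1]
  have key : ∀ k : ℤ, (∑' j : ℕ, (A⁻¹ ^ (j + 1)).mulVec (B.mulVec (w (k + (j : ℤ)))))
      = A⁻¹.mulVec (B.mulVec (w k)) +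
        A⁻¹.mulVec (∑' j : ℕ, (A⁻¹ ^ (j + 1)).mulVec (B.mulVec (w ((k + 1) + (j : ℤ))))) := by
    intro k
    let T : (Fin q → ℝ) →L[ℝ] (Fin q → ℝ) :=
      LinearMap.toContinuousLinearMap (Matrix.mulVecLin A⁻¹)
    have hTs : A⁻¹.mulVec (∑' j : ℕ, (A⁻¹ ^ (j + 1)).mulVec (B.mulVec (w ((k + 1) + (j : ℤ)))))
        = ∑' j : ℕ, A⁻¹.mulVec ((A⁻¹ ^ (j + 1)).mulVec (B.mulVec (w ((k + 1) + (j : ℤ))))) :=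
      T.map_tsum (hS (k + 1))
    rw [Summable.tsum_eq_zero_add (hS k), hTs]
    congr 1
    · simp
    · refine tsum_congr fun j => ?_
      have hidx : (k + ((j + 1 : ℕ) : ℤ)) = (k + 1 + (j : ℤ)) := by push_cast; ring
      rw [hidx, pow_succ']
      exact (Matrix.mulVec_mulVec _ _ _).symm
  refine ⟨hsum, ⟨K * (1 - r)⁻¹, hb⟩, ?_, ?_⟩
  · intro k
    rw [bwdSol, key k, neg_add, bwdSol, Matrix.mulVec_neg]
    abel
  · intro k
    have h3 : bwdSol A B w k =
        A⁻¹.mulVec (bwdSol A B w (k + 1)) - A⁻¹.mulVec (B.mulVec (w k)) := by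
      rw [bwdSol, key k, neg_add, bwdSol, Matrix.mulVec_neg]
      abel
    have h4 := congrArg (fun v => A.mulVec v) h3
    simp only [Matrix.mulVec_sub, Matrix.mulVec_mulVec, ← Matrix.mul_assoc,
      Matrix.mul_nonsing_inv A hAdet, Matrix.one_mulVec, Matrix.one_mul] at h4
    rw [h4]
    abel
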